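/- For a flow (X,T) on a compact metric space, the map Θ : E(2^X) → E(X) defined by Θ(α) = α′ where {α′(x)} = α({x}) for all x ∈ X, is a well-defined continuous homomorphism of flows (Θ(t∘α) = t∘Θ(α) for all t ∈ T). -/

import Mathlib

open TopologicalSpace

/-- The induced action of `t ∈ T` on the hyperspace `2^X` of nonempty closed
(= compact) subsets of the compact metric space `X`: `t • A = {t • a : a ∈ A}`. -/
def hyperAct {T X : Type*} [Group T] [MetricSpace X] [MulAction T X]
    (hc : ∀ t : T, Continuous fun x : X => t • x) (t : T)
    (A : NonemptyCompacts X) : NonemptyCompacts X :=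
  ⟨⟨(fun x : X => t • x) '' (A : Set X), A.isCompact.image (hc t)⟩,
    A.nonempty.image _⟩

/-- The enveloping semigroup `E(2^X)` of the induced flow: the closure of the induced
maps in `(2^X)^{2^X}` with the product topology. -/
def envHyper {T X : Type*} [Group T] [MetricSpace X] [MulAction T X]
    (hc : ∀ t : T, Continuous fun x : X => t • x) :
    Set (NonemptyCompacts X → NonemptyCompacts X) :=
  closure (Set.range (hyperAct hc))

/-- The singleton `{x}` as an element of the hyperspace. -/
def singNC {X : Type*} [MetricSpace X] (x : X) : NonemptyCompacts X :=
  ⟨⟨{x}, isCompact_singleton⟩, Set.singleton_nonempty x⟩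

lemma singNC_isometry {X : Type*} [MetricSpace X] : Isometry (singNC (X := X)) := by
  intro x y
  show Metric.hausdorffEDist ({x} : Set X) {y} = edist x y
  simp [Metric.hausdorffEDist_def, Metric.infEDist_singleton, edist_comm]

lemma hyperAct_singNC {T X : Type*} [Group T] [MetricSpace X] [MulAction T X]
    (hc : ∀ t : T, Continuous fun x : X => t • x) (t : T) (x : X) :
    hyperAct hc t (singNC x) = singNC (t • x) := by
  apply NonemptyCompacts.ext
  show (fun x : X => t • x) '' {x} = {t • x}
  simp

/-- The map `Θ : E(2^X) → E(X)`, `Θ(α) = α′` where `{α′(x)} = α({x})`, is a well-defined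
continuous homomorphism of flows. -/
theorem exists_theta_flow_homomorphism
    {T X : Type*} [Group T] [MetricSpace X] [CompactSpace X] [MulAction T X]
    (hc : ∀ t : T, Continuous fun x : X => t • x) :
    ∃ Θ : ↥(envHyper hc) → (X → X),
      Continuous Θ ∧
      ∀ α : ↥(envHyper hc),
        Θ α ∈ closure (Set.range fun t : T => fun x : X => t • x) ∧
        (∀ x : X, ((α : NonemptyCompacts X → NonemptyCompacts X) (singNC x) : Set X)
          = {Θ α x}) ∧
        ∀ t : T,
          ∀ h : hyperAct hc t ∘ (α : NonemptyCompacts X → NonemptyCompacts X) ∈ envHyper hc,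
            Θ ⟨_, h⟩ = (fun x : X => t • x) ∘ Θ α := by
  classical
  have isom : Isometry (singNC (X := X)) := singNC_isometry
  have hcont : Continuous (singNC (X := X)) := isom.continuous
  have hinj : Function.Injective (singNC (X := X)) := isom.injective
  have hrangeclosed : IsClosed (Set.range (singNC (X := X))) :=
    (isCompact_range hcont).isClosed
  let e : X ≃ₜ Set.range (singNC (X := X)) :=
    isom.isEmbedding.toHomeomorph
  -- every element of the enveloping semigroup sends singletons to singletons
  have hmem : ∀ (α : ↥(envHyper hc)) (x : X),
      (α : NonemptyCompacts X → NonemptyCompacts X) (singNC x)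
        ∈ Set.range (singNC (X := X)) := by
    intro α x
    have h1 : α.1 ∈ closure (Set.range (hyperAct hc)) := α.2
    have hev : Continuous fun β : NonemptyCompacts X → NonemptyCompacts X =>
        β (singNC x) := continuous_apply _
    have h2 : (fun β : NonemptyCompacts X → NonemptyCompacts X => β (singNC x)) ''
        Set.range (hyperAct hc) ⊆ Set.range (singNC (X := X)) := by
      rintro _ ⟨_, ⟨t, rfl⟩, rfl⟩
      exact ⟨t • x, (hyperAct_singNC hc t x).symm⟩
    have h3 := image_closure_subset_closure_image
      (s := Set.range (hyperAct hc)) hev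
    have h4 : α.1 (singNC x) ∈ closure (Set.range (singNC (X := X))) :=
      closure_mono h2 (h3 ⟨α.1, h1, rfl⟩)
    rwa [hrangeclosed.closure_eq] at h4
  set Θ : ↥(envHyper hc) → X → X :=
    fun α x => e.symm ⟨α.1 (singNC x), hmem α x⟩ with hΘ
  have hkey : ∀ (α : ↥(envHyper hc)) (x : X),
      singNC (Θ α x) = α.1 (singNC x) := by
    intro α x
    have h := e.apply_symm_apply ⟨α.1 (singNC x), hmem α x⟩
    exact congrArg Subtype.val h
  have hΘcont : Continuous Θ := by
    apply continuous_pi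
    intro x
    exact e.symm.continuous.comp
      (Continuous.subtype_mk ((continuous_apply (singNC x)).comp continuous_subtype_val) _)
  -- Θ of an induced map is the original action map
  have hΘact : ∀ (t : T) (hb : hyperAct hc t ∈ envHyper hc),
      Θ ⟨hyperAct hc t, hb⟩ = fun x : X => t • x := by
    intro t hb
    funext x
    apply hinj
    rw [hkey ⟨hyperAct hc t, hb⟩ x]
    exact hyperAct_singNC hc t x
  refine ⟨Θ, hΘcont, fun α => ⟨?_, ?_, ?_⟩⟩
  · -- Θ α lies in the enveloping semigroup E(X)
    rw [mem_closure_iff]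
    intro U hU hΘU
    have hpre : IsOpen (Θ ⁻¹' U) := hU.preimage hΘcont
    obtain ⟨V, hV, hVeq⟩ := isOpen_induced_iff.1 hpre
    have hαpre : α ∈ Θ ⁻¹' U := hΘU
    have hαV : α.1 ∈ V := by
      rw [← hVeq] at hαpre
      exact hαpre
    have h1 : α.1 ∈ closure (Set.range (hyperAct hc)) := α.2
    obtain ⟨β, hβV, t, hβt⟩ := mem_closure_iff.1 h1 V hV hαV
    subst hβt
    have hbmem : hyperAct hc t ∈ envHyper hc := subset_closure ⟨t, rfl⟩
    have hbU : (⟨hyperAct hc t, hbmem⟩ : ↥(envHyper hc)) ∈ Θ ⁻¹' U := by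
      rw [← hVeq]
      exact hβV
    exact ⟨Θ ⟨hyperAct hc t, hbmem⟩, hbU, t, (hΘact t hbmem).symm⟩
  · -- α sends the singleton {x} to {Θ α x}
    intro x
    exact congrArg (fun A : NonemptyCompacts X => (A : Set X)) (hkey α x).symm
  · -- flow homomorphism
    intro t h
    funext x
    apply hinj
    rw [hkey ⟨_, h⟩ x]
    show hyperAct hc t (α.1 (singNC x)) = singNC (t • Θ α x)
    rw [← hkey α x, hyperAct_singNC]
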